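/- For every integer n ≥ 2 there exist an integer M ≥ (n/8)^{n/2} and permutations π_0, π_1, …, π_M ∈ S_n with π_0 = id such that for every pair of distinct indices i, j ∈ {0,…,M}, (1/n)·#{k ∈ {1,…,n} : π_i(k) ≠ π_j(k)} ≥ 1/2. -/

import Mathlib

open Finset

/-- Permutations fixing every point of `T` number at most `(n - |T|)!`. -/
lemma card_fixing_le (n : ℕ) (T : Finset (Fin n)) :
    (univ.filter fun σ : Equiv.Perm (Fin n) => ∀ x ∈ T, σ x = x).card
      ≤ (n - T.card).factorial := by
  rw [← Fintype.card_subtype]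
  have key : ∀ (σ : Equiv.Perm (Fin n)), (∀ x ∈ T, σ x = x) →
      ∀ x : Fin n, x ∈ Tᶜ ↔ σ x ∈ Tᶜ := by
    intro σ h x
    simp only [Finset.mem_compl]
    constructor
    · intro hx hσx
      have h1 : σ (σ x) = σ x := h _ hσx
      have h2 := σ.injective h1
      rw [h2] at hσx
      exact hx hσx
    · intro hσx hx
      rw [h x hx] at hσx
      exact hσx hx
  have hinj : Function.Injective
      (fun σ : {σ : Equiv.Perm (Fin n) // ∀ x ∈ T, σ x = x} =>
        Equiv.Perm.subtypePerm σ.1 (fun x => (key σ.1 σ.2 x).symm)) := by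
    rintro ⟨σ, hσ⟩ ⟨τ, hτ⟩ h
    apply Subtype.ext
    apply Equiv.ext
    intro x
    by_cases hx : x ∈ T
    · rw [hσ x hx, hτ x hx]
    · exact congrArg Subtype.val
        (congrArg (fun e : Equiv.Perm {y // y ∈ Tᶜ} => e ⟨x, Finset.mem_compl.2 hx⟩) h)
  calc Fintype.card {σ : Equiv.Perm (Fin n) // ∀ x ∈ T, σ x = x}
      ≤ Fintype.card (Equiv.Perm {x : Fin n // x ∈ Tᶜ}) := Fintype.card_le_of_injective _ hinj
    _ = (n - T.card).factorial := by
        rw [Fintype.card_perm, Fintype.card_coe, Finset.card_compl, Fintype.card_fin]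

/-- Ball bound: permutations agreeing with `π` in at least `m` places. -/
lemma card_ball_le (n m : ℕ) (π : Equiv.Perm (Fin n)) :
    (univ.filter fun σ : Equiv.Perm (Fin n) =>
        m ≤ (univ.filter fun k => σ k = π k).card).card
      ≤ n.choose m * (n - m).factorial := by
  have hsub : (univ.filter fun σ : Equiv.Perm (Fin n) =>
        m ≤ (univ.filter fun k => σ k = π k).card)
      ⊆ (Finset.powersetCard m (univ : Finset (Fin n))).biUnion
          (fun S => univ.filter fun σ : Equiv.Perm (Fin n) => ∀ k ∈ S, σ k = π k) := by
    intro σ hσ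
    simp only [mem_filter, mem_univ, true_and] at hσ
    obtain ⟨S, hS, hScard⟩ := Finset.exists_subset_card_eq hσ
    refine Finset.mem_biUnion.2 ⟨S, ?_, ?_⟩
    · exact Finset.mem_powersetCard.2 ⟨Finset.subset_univ _, hScard⟩
    · simp only [mem_filter, mem_univ, true_and]
      intro k hk
      have := hS hk
      simpa using this
  calc _ ≤ _ := Finset.card_le_card hsub
    _ ≤ ∑ S ∈ Finset.powersetCard m (univ : Finset (Fin n)),
          (univ.filter fun σ : Equiv.Perm (Fin n) => ∀ k ∈ S, σ k = π k).card :=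
        Finset.card_biUnion_le
    _ ≤ ∑ S ∈ Finset.powersetCard m (univ : Finset (Fin n)), (n - m).factorial := by
        refine Finset.sum_le_sum fun S hS => ?_
        have hScard : S.card = m := (Finset.mem_powersetCard.1 hS).2
        -- translate: σ agrees with π on S  ↔  σ * π⁻¹ fixes π(S) pointwise
        have hinj : Function.Injective (fun σ : Equiv.Perm (Fin n) => σ * π⁻¹) :=
          fun a b h => by
            have := congrArg (fun e => e * π) h
            simpa [mul_assoc] using this
        have hmap : ∀ σ ∈ (univ.filter fun σ : Equiv.Perm (Fin n) => ∀ k ∈ S, σ k = π k),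
            (σ * π⁻¹) ∈ (univ.filter fun τ : Equiv.Perm (Fin n) =>
              ∀ x ∈ S.image π, τ x = x) := by
          intro σ hσ
          simp only [mem_filter, mem_univ, true_and] at hσ ⊢
          intro x hx
          obtain ⟨k, hk, rfl⟩ := Finset.mem_image.1 hx
          simp [Equiv.Perm.mul_apply, hσ k hk]
        calc (univ.filter fun σ : Equiv.Perm (Fin n) => ∀ k ∈ S, σ k = π k).card
            ≤ (univ.filter fun τ : Equiv.Perm (Fin n) => ∀ x ∈ S.image π, τ x = x).card :=
              Finset.card_le_card_of_injOn _ hmap (hinj.injOn)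
          _ ≤ (n - (S.image π).card).factorial := card_fixing_le n _
          _ = (n - m).factorial := by
              rw [Finset.card_image_of_injective _ π.injective, hScard]
    _ = n.choose m * (n - m).factorial := by
        rw [Finset.sum_const, Finset.card_powersetCard, Finset.card_univ, Fintype.card_fin,
          smul_eq_mul]

/-- Distance is symmetric. -/
lemma dist_symm (n : ℕ) (a b : Equiv.Perm (Fin n)) :
    (univ.filter fun k => a k ≠ b k).card = (univ.filter fun k => b k ≠ a k).card := by
  congr 1
  exact Finset.filter_congr fun k _ => by simp [ne_comm]

/-- Existence of a large code containing the identity. -/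
lemma exists_code (n : ℕ) (hn : 2 ≤ n) :
    ∃ C : Finset (Equiv.Perm (Fin n)), (1 : Equiv.Perm (Fin n)) ∈ C ∧
      (∀ a ∈ C, ∀ b ∈ C, a ≠ b → n ≤ 2 * (univ.filter fun k => a k ≠ b k).card) ∧
      (n / 2 + 1).factorial ≤ C.card := by
  set m := n / 2 + 1 with hm
  set P : Finset (Equiv.Perm (Fin n)) → Prop := fun C =>
    (1 : Equiv.Perm (Fin n)) ∈ C ∧
      ∀ a ∈ C, ∀ b ∈ C, a ≠ b → n ≤ 2 * (univ.filter fun k => a k ≠ b k).card with hP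
  have hfam : ({1} : Finset (Equiv.Perm (Fin n))) ∈ univ.powerset.filter P := by
    refine Finset.mem_filter.2 ⟨Finset.mem_powerset.2 (Finset.subset_univ _), ?_, ?_⟩
    · exact Finset.mem_singleton_self 1
    · intro a ha b hb hab
      rw [Finset.mem_singleton] at ha hb
      exact absurd (ha.trans hb.symm) hab
  obtain ⟨C, hCmem, hCmax⟩ := Finset.exists_max_image (univ.powerset.filter P)
    Finset.card ⟨_, hfam⟩
  obtain ⟨-, hC1, hCpair⟩ := Finset.mem_filter.1 hCmem
  refine ⟨C, hC1, hCpair, ?_⟩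
  -- every permutation is close to some codeword
  have hcover : ∀ σ : Equiv.Perm (Fin n), ∃ π ∈ C,
      2 * (univ.filter fun k => σ k ≠ π k).card < n := by
    intro σ
    by_cases hσC : σ ∈ C
    · exact ⟨σ, hσC, by simp [Finset.filter_false]; omega⟩
    by_contra hcon
    push_neg at hcon
    have hins : insert σ C ∈ univ.powerset.filter P := by
      refine Finset.mem_filter.2 ⟨Finset.mem_powerset.2 (Finset.subset_univ _),
        Finset.mem_insert_of_mem hC1, ?_⟩
      intro a ha b hb hab
      rcases Finset.mem_insert.1 ha with rfl | ha'
      · rcases Finset.mem_insert.1 hb with rfl | hb'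
        · exact absurd rfl hab
        · exact hcon b hb'
      · rcases Finset.mem_insert.1 hb with rfl | hb'
        · rw [dist_symm]; exact hcon a ha'
        · exact hCpair a ha' b hb' hab
    have := hCmax _ hins
    rw [Finset.card_insert_of_notMem hσC] at this
    omega
  -- close implies large agreement
  have hagree : ∀ σ π : Equiv.Perm (Fin n),
      2 * (univ.filter fun k => σ k ≠ π k).card < n →
      m ≤ (univ.filter fun k => σ k = π k).card := by
    intro σ π h
    have hsum := Finset.card_filter_add_card_filter_not
      (s := (univ : Finset (Fin n))) (p := fun k => σ k = π k)
    rw [Finset.card_univ, Fintype.card_fin] at hsum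
    have hrfl : (univ.filter fun k => σ k ≠ π k).card
        = (univ.filter fun k => ¬ σ k = π k).card := rfl
    simp only [hm]
    omega
  -- covering bound
  have hcov2 : (univ : Finset (Equiv.Perm (Fin n))) ⊆
      C.biUnion (fun π => univ.filter fun σ : Equiv.Perm (Fin n) =>
        m ≤ (univ.filter fun k => σ k = π k).card) := by
    intro σ _
    obtain ⟨π, hπ, hclose⟩ := hcover σ
    exact Finset.mem_biUnion.2 ⟨π, hπ, Finset.mem_filter.2 ⟨Finset.mem_univ _,
      hagree σ π hclose⟩⟩
  have hcount : n.factorial ≤ C.card * (n.choose m * (n - m).factorial) := by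
    calc n.factorial = (univ : Finset (Equiv.Perm (Fin n))).card := by
          rw [Finset.card_univ, Fintype.card_perm, Fintype.card_fin]
      _ ≤ (C.biUnion (fun π => univ.filter fun σ : Equiv.Perm (Fin n) =>
            m ≤ (univ.filter fun k => σ k = π k).card)).card := Finset.card_le_card hcov2
      _ ≤ ∑ π ∈ C, (univ.filter fun σ : Equiv.Perm (Fin n) =>
            m ≤ (univ.filter fun k => σ k = π k).card).card := Finset.card_biUnion_le
      _ ≤ ∑ _π ∈ C, n.choose m * (n - m).factorial :=
          Finset.sum_le_sum fun π _ => card_ball_le n m π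
      _ = C.card * (n.choose m * (n - m).factorial) := by
          rw [Finset.sum_const, smul_eq_mul]
  have hmn : m ≤ n := by simp only [hm]; omega
  have hfact : m.factorial * (n.choose m * (n - m).factorial) = n.factorial := by
    rw [← Nat.choose_mul_factorial_mul_factorial hmn]; ring
  have hpos : 0 < n.choose m * (n - m).factorial :=
    Nat.mul_pos (Nat.choose_pos hmn) (Nat.factorial_pos _)
  have := hcount
  rw [← hfact] at this
  exact Nat.le_of_mul_le_mul_right this hpos

lemma fact_lower (m : ℕ) (hm : 1 ≤ m) : 2 * ((m : ℝ) / 4) ^ m ≤ (m.factorial : ℝ) := by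
  induction m with
  | zero => omega
  | succ k ih =>
    rcases Nat.eq_or_lt_of_le hm with h1 | h1
    · simp only [← h1]
      norm_num
    · have hk : 1 ≤ k := by omega
      have ihk := ih hk
      have hkpos : (0 : ℝ) < k := by positivity
      have h3 : (1 + 1 / (k : ℝ)) ^ k ≤ 4 := by
        have h4 : (1 + 1 / (k : ℝ)) ≤ Real.exp (1 / k) := by
          have := Real.add_one_le_exp (1 / (k : ℝ))
          linarith
        have h5 : (1 + 1 / (k : ℝ)) ^ k ≤ Real.exp (1 / k) ^ k :=
          pow_le_pow_left₀ (by positivity) h4 k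
        have h6 : Real.exp (1 / (k : ℝ)) ^ k = Real.exp 1 := by
          rw [← Real.exp_nat_mul, mul_one_div, div_self (ne_of_gt hkpos)]
        have h7 := Real.exp_one_lt_d9
        rw [h6] at h5
        linarith
      have key : ((k : ℝ) + 1) ^ k ≤ 4 * (k : ℝ) ^ k := by
        have h2 : ((k : ℝ) + 1) = (1 + 1 / k) * k := by field_simp
        rw [h2, mul_pow]
        exact mul_le_mul_of_nonneg_right h3 (by positivity)
      have hstep : 2 * (((k : ℝ) + 1) / 4) ^ (k + 1)
          ≤ ((k : ℝ) + 1) * (2 * ((k : ℝ) / 4) ^ k) := by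
        have e1 : 2 * (((k : ℝ) + 1) / 4) ^ (k + 1)
            = (((k : ℝ) + 1) / (2 * 4 ^ k)) * (((k : ℝ) + 1)) ^ k := by
          rw [pow_succ, div_pow]
          field_simp
          ring
        have e2 : ((k : ℝ) + 1) * (2 * ((k : ℝ) / 4) ^ k)
            = (((k : ℝ) + 1) / (2 * 4 ^ k)) * (4 * (k : ℝ) ^ k) := by
          rw [div_pow]
          field_simp
          ring
        rw [e1, e2]
        exact mul_le_mul_of_nonneg_left key (by positivity)
      have hfin : ((k : ℝ) + 1) * (2 * ((k : ℝ) / 4) ^ k) ≤ ((k + 1).factorial : ℝ) := by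
        rw [Nat.factorial_succ]
        push_cast
        exact mul_le_mul_of_nonneg_left ihk (by positivity)
      push_cast
      linarith

theorem exists_separated_permutations (n : ℕ) (hn : 2 ≤ n) :
    ∃ (M : ℕ) (π : Fin (M + 1) → Equiv.Perm (Fin n)),
      ((n : ℝ) / 8) ^ ((n : ℝ) / 2) ≤ (M : ℝ) ∧ π 0 = 1 ∧
      ∀ i j : Fin (M + 1), i ≠ j →
        (1 : ℝ) / 2 ≤
          ((Finset.univ.filter fun k => π i k ≠ π j k).card : ℝ) / n := by
  obtain ⟨C, hC1, hCpair, hCcard⟩ := exists_code n hn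
  set m := n / 2 + 1 with hm
  have hCpos : 0 < C.card := Finset.card_pos.2 ⟨1, hC1⟩
  set M := C.card - 1 with hMdef
  have hMC : C.card = M + 1 := by omega
  have hC' : (C.erase 1).card = M := by rw [Finset.card_erase_of_mem hC1]
  let f : Fin M ≃ {x // x ∈ C.erase 1} :=
    (finCongr hC'.symm).trans (C.erase 1).equivFin.symm
  let g : Fin (M + 1) → Equiv.Perm (Fin n) :=
    fun i => if h : i = 0 then 1 else (f (i.pred h) : Equiv.Perm (Fin n))
  have hg0 : g 0 = 1 := by simp [g]
  have hgmem : ∀ i, g i ∈ C := by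
    intro i
    by_cases h : i = 0
    · simp [g, h, hC1]
    · simp only [g, dif_neg h]
      exact Finset.mem_of_mem_erase (f (i.pred h)).2
  have hginj : ∀ i j : Fin (M + 1), i ≠ j → g i ≠ g j := by
    intro i j hij
    by_cases hi : i = 0
    · subst hi
      have hj : j ≠ 0 := fun h => hij h.symm
      simp only [g, dif_pos rfl, dif_neg hj]
      intro h
      exact Finset.ne_of_mem_erase (f (j.pred hj)).2 h.symm
    · by_cases hj : j = 0
      · subst hj
        simp only [g, dif_neg hi, dif_pos rfl]
        exact Finset.ne_of_mem_erase (f (i.pred hi)).2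
      · simp only [g, dif_neg hi, dif_neg hj]
        intro h
        have h2 : f (i.pred hi) = f (j.pred hj) := Subtype.ext h
        have h3 : i.pred hi = j.pred hj := f.injective h2
        exact hij (by rwa [Fin.pred_inj] at h3)
  refine ⟨M, g, ?_, hg0, ?_⟩
  · -- the size bound
    have hMcard : (m.factorial : ℝ) ≤ (M : ℝ) + 1 := by
      have : m.factorial ≤ M + 1 := hMC ▸ hCcard
      exact_mod_cast this
    by_cases h8 : n ≤ 8
    · have hbound : ((n : ℝ) / 8) ^ ((n : ℝ) / 2) ≤ 1 := by
        apply Real.rpow_le_one (by positivity) _ (by positivity)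
        have : (n : ℝ) ≤ 8 := by exact_mod_cast h8
        linarith
      have hm2 : 2 ≤ m := by omega
      have : (2 : ℝ) ≤ m.factorial := by
        have := (Nat.self_le_factorial m)
        have h2 : 2 ≤ m.factorial := le_trans hm2 this
        exact_mod_cast h2
      linarith
    · push_neg at h8
      have h9 : 9 ≤ n := h8
      have hn8 : (1 : ℝ) ≤ (n : ℝ) / 8 := by
        have : (8 : ℝ) ≤ n := by exact_mod_cast (by omega : 8 ≤ n)
        linarith
      have hnm : (n : ℝ) / 2 ≤ (m : ℝ) := by
        have h1 : n ≤ 2 * m := by omega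
        have h2 : (n : ℝ) ≤ 2 * m := by exact_mod_cast h1
        linarith
      have hm4 : 4 ≤ m := by omega
      have hstep1 : ((n : ℝ) / 8) ^ ((n : ℝ) / 2) ≤ ((n : ℝ) / 8) ^ (m : ℝ) :=
        Real.rpow_le_rpow_of_exponent_le hn8 hnm
      have hstep2 : ((n : ℝ) / 8) ^ (m : ℝ) = ((n : ℝ) / 8) ^ (m : ℕ) :=
        Real.rpow_natCast _ m
      have hstep3 : ((n : ℝ) / 8) ^ (m : ℕ) ≤ ((m : ℝ) / 4) ^ (m : ℕ) := by
        apply pow_le_pow_left₀ (by positivity)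
        have h1 : n ≤ 2 * m := by omega
        have h2 : (n : ℝ) ≤ 2 * m := by exact_mod_cast h1
        linarith
      have hfl := fact_lower m (by omega)
      have hone : (1 : ℝ) ≤ ((m : ℝ) / 4) ^ (m : ℕ) := by
        apply one_le_pow₀
        have : (4 : ℝ) ≤ m := by exact_mod_cast hm4
        linarith
      rw [hstep2] at hstep1
      calc ((n : ℝ) / 8) ^ ((n : ℝ) / 2) ≤ ((m : ℝ) / 4) ^ (m : ℕ) :=
            le_trans hstep1 hstep3
        _ ≤ (M : ℝ) := by linarith
  · -- the separation bound
    intro i j hij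
    have hfar := hCpair (g i) (hgmem i) (g j) (hgmem j) (hginj i j hij)
    have hnpos : (0 : ℝ) < n := by positivity
    rw [le_div_iff₀ hnpos]
    have hcast : (n : ℝ) ≤ 2 * ((Finset.univ.filter fun k => g i k ≠ g j k).card : ℝ) := by
      exact_mod_cast hfar
    linarith
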